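/- Let m ≥ 2 be an integer and define β₁ = m+1-(m+2)√((m-1)/(m+1)) and β₂ = m+1-m√((m+1)/(m-1)). Then |β₁| < 1, |β₂| < 1, |β₁| + |β₂|/2 < 1, and |β₂| + |β₁|/2 < 1. -/

import Mathlib

set_option maxHeartbeats 1000000


theorem beta_bounds (m : ℤ) (hm : 2 ≤ m)
    (β₁ β₂ : ℝ)
    (hβ₁ : β₁ = m + 1 - (m + 2) * Real.sqrt ((m - 1) / (m + 1)))
    (hβ₂ : β₂ = m + 1 - m * Real.sqrt ((m + 1) / (m - 1))) :
    |β₁| < 1 ∧ |β₂| < 1 ∧ |β₁| + |β₂| / 2 < 1 ∧ |β₂| + |β₁| / 2 < 1 := by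
  have hm' : (2:ℝ) ≤ (m:ℝ) := by exact_mod_cast hm
  set x : ℝ := (m:ℝ) with hxdef
  have hx1 : (0:ℝ) < x - 1 := by linarith
  have hx2 : (0:ℝ) < x + 1 := by linarith
  set s : ℝ := Real.sqrt ((x - 1) / (x + 1)) with hsdef
  have hs2 : s ^ 2 = (x - 1) / (x + 1) := Real.sq_sqrt (by positivity)
  have hspos : 0 < s := Real.sqrt_pos.mpr (by positivity)
  have hsq : ((x + 1) / (x - 1) * s) ^ 2 = (x + 1) / (x - 1) := by
    rw [mul_pow, hs2]; field_simp
  have hsinv : Real.sqrt ((x + 1) / (x - 1)) = (x + 1) / (x - 1) * s := by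
    have h := Real.sqrt_sq (show (0:ℝ) ≤ (x + 1) / (x - 1) * s by positivity)
    rw [hsq] at h
    exact h
  rw [hsinv] at hβ₂
  have hw : x * ((x + 1) / (x - 1) * s) = x * (x + 1) * s / (x - 1) := by ring
  rw [hw] at hβ₂
  -- key squared bounds
  have hA : (x + 2) * s < x + 1 := by
    have h2 : ((x + 2) * s) ^ 2 < (x + 1) ^ 2 := by
      rw [mul_pow, hs2, ← mul_div_assoc, div_lt_iff₀ hx2]
      nlinarith
    exact lt_of_pow_lt_pow_left₀ 2 (by linarith) h2
  have hB : x < (x + 2) * s := by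
    have h2 : x ^ 2 < ((x + 2) * s) ^ 2 := by
      rw [mul_pow, hs2, ← mul_div_assoc, lt_div_iff₀ hx2]
      nlinarith [sq_nonneg (x - 2)]
    exact lt_of_pow_lt_pow_left₀ 2 (mul_pos (by linarith) hspos).le h2
  have hC : (x - 1) * (x + 1) < x * (x + 1) * s := by
    have h2 : ((x - 1) * (x + 1)) ^ 2 < (x * (x + 1) * s) ^ 2 := by
      rw [mul_pow (x * (x + 1)) s, hs2, ← mul_div_assoc, lt_div_iff₀ hx2]
      nlinarith [mul_pos (mul_pos hx1 hx2) hx2]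
    exact lt_of_pow_lt_pow_left₀ 2
      (mul_pos (mul_pos (by linarith) hx2) hspos).le h2
  have h24 : (0:ℝ) < 2 * x ^ 2 - 4 := by nlinarith [sq_nonneg (x - 2)]
  have hD : x * (x + 1) * s < (x + 2) * (x - 1) := by
    have h2 : (x * (x + 1) * s) ^ 2 < ((x + 2) * (x - 1)) ^ 2 := by
      rw [mul_pow (x * (x + 1)) s, hs2, ← mul_div_assoc, div_lt_iff₀ hx2]
      nlinarith [mul_pos (mul_pos hx1 hx2) h24]
    exact lt_of_pow_lt_pow_left₀ 2 (by nlinarith) h2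
  have hd : (0:ℝ) < 4 * x ^ 3 - 7 * x ^ 2 - 10 * x + 17 := by
    nlinarith [mul_nonneg (mul_nonneg (by linarith : (0:ℝ) ≤ x - 2)
      (by linarith : (0:ℝ) ≤ x - 2)) (by linarith : (0:ℝ) ≤ 4 * x + 9)]
  have hE : (x - 1) ^ 2 < (x ^ 2 + x - 4) * s := by
    have hq : (0:ℝ) < x ^ 2 + x - 4 := by nlinarith [sq_nonneg (x - 2)]
    have h2 : ((x - 1) ^ 2) ^ 2 < ((x ^ 2 + x - 4) * s) ^ 2 := by
      rw [mul_pow, hs2, ← mul_div_assoc, lt_div_iff₀ hx2]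
      nlinarith [mul_pos hx1 hd]
    exact lt_of_pow_lt_pow_left₀ 2 (mul_pos hq hspos).le h2
  have hd2 : (0:ℝ) < 4 * x ^ 3 + 3 * x ^ 2 - 10 * x - 13 := by
    nlinarith [mul_nonneg (by linarith : (0:ℝ) ≤ x - 2)
      (by nlinarith [sq_nonneg x] : (0:ℝ) ≤ 4 * x ^ 2 + 11 * x + 12)]
  have hF : (x ^ 2 + x + 2) * s < (x + 3) * (x - 1) := by
    have h2 : ((x ^ 2 + x + 2) * s) ^ 2 < ((x + 3) * (x - 1)) ^ 2 := by
      rw [mul_pow, hs2, ← mul_div_assoc, div_lt_iff₀ hx2]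
      nlinarith [mul_pos hx1 hd2]
    exact lt_of_pow_lt_pow_left₀ 2 (by nlinarith) h2
  -- bounds on the quotient term
  have hw1 : x + 1 < x * (x + 1) * s / (x - 1) := by
    rw [lt_div_iff₀ hx1]; nlinarith [hC]
  have hw2 : x * (x + 1) * s / (x - 1) < x + 2 := by
    rw [div_lt_iff₀ hx1]; nlinarith [hD]
  have hw3 : x * (x + 1) * s / (x - 1) < 2 * (x + 2) * s + 1 - x := by
    rw [div_lt_iff₀ hx1]; nlinarith [hE]
  have hw4 : x * (x + 1) * s / (x - 1) < (x + 3) / 2 + (x + 2) * s / 2 := by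
    rw [div_lt_iff₀ hx1]; nlinarith [hF]
  have b1a : 0 < β₁ := by rw [hβ₁]; linarith [hA]
  have b1b : β₁ < 1 := by rw [hβ₁]; linarith [hB]
  have b2a : β₂ < 0 := by rw [hβ₂]; linarith [hw1]
  have b2b : (-1:ℝ) < β₂ := by rw [hβ₂]; linarith [hw2]
  have c1 : β₁ + -β₂ / 2 < 1 := by rw [hβ₁, hβ₂]; linarith [hw3]
  have c2 : -β₂ + β₁ / 2 < 1 := by rw [hβ₁, hβ₂]; linarith [hw4]
  rw [abs_of_pos b1a, abs_of_neg b2a]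
  exact ⟨b1b, by linarith, by linarith, by linarith⟩
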